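/- arXiv:1912.04551 — 6 statements merged into one kernel-verified Lean document; each statement's English description precedes it below -/
import Mathlib

section
/- Let F be a field with char F ≠ 2, Ω a nonempty finite set, and A ⊆ M_Ω(F) a linear subspace closed under the Hadamard (entrywise) product. Then there exists a unique basis A_1, ..., A_r of A consisting of 0-1 matrices with pairwise disjoint supports (supp(A_i) ∩ supp(A_j) = ∅ whenever i ≠ j). Moreover: (a) if the identity matrix I_Ω belongs to A, then I_Ω = Σ_{i∈F'} A_i for some subset F' ⊆ {1,...,r}; (b) if the all-ones matrix J_Ω belongs to A, then Σ_{i=1}^r A_i = J_Ω; (c) if A is closed under transposition, then the set {A_1,...,A_r} is closed under transposition. -/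
open Matrix

noncomputable section

namespace JordanPaper

open scoped Classical

variable {Ω : Type*}

/-- The adjacency matrix (over `F`) of a binary relation on `Ω`. -/
def adj (F : Type*) [Zero F] [One F] (c : Set (Ω × Ω)) : Matrix Ω Ω F :=
  Matrix.of fun a b => if (a, b) ∈ c then 1 else 0

/-- The all-ones matrix. -/
def allOnes (F : Type*) [One F] : Matrix Ω Ω F :=
  Matrix.of fun _ _ => 1

/-- The diagonal relation `1_Δ` on a subset `Δ ⊆ Ω`. -/
def diagRel (Δ : Set Ω) : Set (Ω × Ω) := {p | p.1 = p.2 ∧ p.1 ∈ Δ}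

/-- The transposed relation. -/
def transposeRel (c : Set (Ω × Ω)) : Set (Ω × Ω) := {p | (p.2, p.1) ∈ c}

/-- `outSet c α = c(α) = {β | (α,β) ∈ c}`. -/
def outSet (c : Set (Ω × Ω)) (α : Ω) : Set Ω := {β | (α, β) ∈ c}

/-- A partition of `Ω × Ω` into nonempty pairwise disjoint classes. -/
def IsPartition (P : Set (Set (Ω × Ω))) : Prop :=
  (∀ c ∈ P, c.Nonempty) ∧ (∀ c ∈ P, ∀ d ∈ P, c ≠ d → c ∩ d = ∅) ∧ ⋃₀ P = Set.univ

/-- A partition of `Δ × Δ` into nonempty pairwise disjoint classes. -/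
def IsPartitionOn (Δ : Set Ω) (P : Set (Set (Ω × Ω))) : Prop :=
  (∀ c ∈ P, c.Nonempty) ∧ (∀ c ∈ P, ∀ d ∈ P, c ≠ d → c ∩ d = ∅) ∧ ⋃₀ P = Δ ×ˢ Δ

/-- A rainbow: a partition of `Ω × Ω` such that the diagonal is a union of classes
and the set of classes is closed under transposition. -/
def IsRainbow (P : Set (Set (Ω × Ω))) : Prop :=
  IsPartition P ∧
  (∀ c ∈ P, (c ∩ diagRel (Set.univ : Set Ω)).Nonempty → c ⊆ diagRel (Set.univ : Set Ω)) ∧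
  (∀ c ∈ P, transposeRel c ∈ P)

/-- `|c(α) ∩ dᵀ(β)|`. -/
def cnum (c d : Set (Ω × Ω)) (α β : Ω) : ℕ :=
  (outSet c α ∩ outSet (transposeRel d) β).ncard

/-- `|c(α) ∩ dᵀ(β)| + |d(α) ∩ cᵀ(β)|`. -/
def jnum (c d : Set (Ω × Ω)) (α β : Ω) : ℕ :=
  cnum c d α β + cnum d c α β

/-- The coherence (intersection-number) condition. -/
def IsCoherentCond (P : Set (Set (Ω × Ω))) : Prop :=
  ∀ c ∈ P, ∀ d ∈ P, ∀ f ∈ P, ∀ p ∈ f, ∀ q ∈ f,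
    cnum c d (p : Ω × Ω).1 (p : Ω × Ω).2 = cnum c d (q : Ω × Ω).1 (q : Ω × Ω).2

/-- The Jordan (symmetrized intersection-number) condition. -/
def IsJordanCond (P : Set (Set (Ω × Ω))) : Prop :=
  ∀ c ∈ P, ∀ d ∈ P, ∀ f ∈ P, ∀ p ∈ f, ∀ q ∈ f,
    jnum c d (p : Ω × Ω).1 (p : Ω × Ω).2 = jnum c d (q : Ω × Ω).1 (q : Ω × Ω).2

/-- A coherent configuration. -/
def IsCoherentConfig (P : Set (Set (Ω × Ω))) : Prop := IsRainbow P ∧ IsCoherentCond P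

/-- A Jordan configuration. -/
def IsJordanConfig (P : Set (Set (Ω × Ω))) : Prop := IsRainbow P ∧ IsJordanCond P

/-- An association scheme on a subset `Δ` (homogeneous coherent configuration on `Δ`). -/
def IsAssocSchemeOn (Δ : Set Ω) (P : Set (Set (Ω × Ω))) : Prop :=
  IsPartitionOn Δ P ∧ diagRel Δ ∈ P ∧ (∀ c ∈ P, transposeRel c ∈ P) ∧ IsCoherentCond P

/-- The Jordan product of matrices. -/
def jmul (F : Type*) [Field F] [Fintype Ω] (x y : Matrix Ω Ω F) : Matrix Ω Ω F :=
  (2 : F)⁻¹ • (x * y + y * x)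

/-- A coherent algebra. -/
def IsCoherentAlgebra (F : Type*) [Field F] [Fintype Ω] [DecidableEq Ω]
    (A : Submodule F (Matrix Ω Ω F)) : Prop :=
  (1 : Matrix Ω Ω F) ∈ A ∧ allOnes F ∈ A ∧ (∀ x ∈ A, xᵀ ∈ A) ∧
  (∀ x ∈ A, ∀ y ∈ A, x * y ∈ A) ∧ (∀ x ∈ A, ∀ y ∈ A, Matrix.hadamard x y ∈ A)

/-- A coherent Jordan algebra. -/
def IsCoherentJAlgebra (F : Type*) [Field F] [Fintype Ω] [DecidableEq Ω]
    (A : Submodule F (Matrix Ω Ω F)) : Prop :=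
  (1 : Matrix Ω Ω F) ∈ A ∧ allOnes F ∈ A ∧ (∀ x ∈ A, xᵀ ∈ A) ∧
  (∀ x ∈ A, ∀ y ∈ A, jmul F x y ∈ A) ∧ (∀ x ∈ A, ∀ y ∈ A, Matrix.hadamard x y ∈ A)

/-- A basis of `A` consisting of 0-1 matrices with pairwise disjoint supports. -/
def GoodBasis {F : Type*} [Field F] {Ω : Type*} [Fintype Ω]
    (A : Submodule F (Matrix Ω Ω F)) (B : Finset (Matrix Ω Ω F)) : Prop :=
  (∀ M ∈ B, ∀ a b, M a b = 0 ∨ M a b = 1) ∧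
  (∀ M ∈ B, ∀ N ∈ B, M ≠ N → ∀ a b, M a b = 0 ∨ N a b = 0) ∧
  LinearIndependent F (fun M : {x // x ∈ B} => (M : Matrix Ω Ω F)) ∧
  Submodule.span F (B : Set (Matrix Ω Ω F)) = A

section Aux
set_option linter.unusedSectionVars false

variable {F : Type*} [Field F] [Fintype Ω]

/-- The set of 0-1 matrices belonging to `A`. -/
def ESet (A : Submodule F (Matrix Ω Ω F)) : Set (Matrix Ω Ω F) :=
  {M | M ∈ A ∧ ∀ a b, M a b = 0 ∨ M a b = 1}

lemma eSet_finite (A : Submodule F (Matrix Ω Ω F)) : (ESet A).Finite := by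
  classical
  apply Set.Finite.subset
    (Set.finite_range fun f : Ω → Ω → Bool => Matrix.of fun a b => if f a b then (1 : F) else 0)
  rintro M ⟨-, h01⟩
  refine ⟨fun a b => decide (M a b = 1), ?_⟩
  ext a b
  rcases h01 a b with h | h <;> simp [h]

/-- A finset version of `ESet`. -/
noncomputable def EFin (A : Submodule F (Matrix Ω Ω F)) : Finset (Matrix Ω Ω F) :=
  (eSet_finite A).toFinset

lemma mem_EFin {A : Submodule F (Matrix Ω Ω F)} {M : Matrix Ω Ω F} :
    M ∈ EFin A ↔ M ∈ ESet A := Set.Finite.mem_toFinset _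

/-- The atom (class indicator) through position `s`. -/
noncomputable def atomM (A : Submodule F (Matrix Ω Ω F)) (s : Ω × Ω) : Matrix Ω Ω F :=
  Matrix.of fun a b => if ∀ e ∈ ESet A, e a b = e s.1 s.2 then (1 : F) else 0

lemma atomM_apply_eq_one {A : Submodule F (Matrix Ω Ω F)} {s : Ω × Ω} {a b : Ω} :
    atomM A s a b = 1 ↔ ∀ e ∈ ESet A, e a b = e s.1 s.2 := by
  simp only [atomM, Matrix.of_apply]
  constructor
  · intro h1
    by_contra hc
    rw [if_neg hc] at h1
    exact zero_ne_one h1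
  · intro h
    rw [if_pos h]

lemma atomM_01 {A : Submodule F (Matrix Ω Ω F)} {s : Ω × Ω} (a b : Ω) :
    atomM A s a b = 0 ∨ atomM A s a b = 1 := by
  simp only [atomM, Matrix.of_apply]
  split_ifs <;> simp

lemma atomM_self {A : Submodule F (Matrix Ω Ω F)} {s : Ω × Ω} :
    atomM A s s.1 s.2 = 1 := atomM_apply_eq_one.2 fun _ _ => rfl

lemma atomM_eq {A : Submodule F (Matrix Ω Ω F)} {s : Ω × Ω} {a b : Ω}
    (h : atomM A s a b = 1) : atomM A s = atomM A (a, b) := by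
  have h' := atomM_apply_eq_one.1 h
  ext u v
  simp only [atomM, Matrix.of_apply]
  refine if_congr ⟨fun hh e he => (hh e he).trans (h' e he).symm,
    fun hh e he => (hh e he).trans (h' e he)⟩ rfl rfl

lemma atomM_le {A : Submodule F (Matrix Ω Ω F)} {s : Ω × Ω} {a b : Ω} {e : Matrix Ω Ω F}
    (he : e ∈ ESet A) (h1 : atomM A s a b = 1) : e a b = e s.1 s.2 :=
  atomM_apply_eq_one.1 h1 e he

lemma poly_mem (A : Submodule F (Matrix Ω Ω F))
    (hHad : ∀ x ∈ A, ∀ y ∈ A, Matrix.hadamard x y ∈ A)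
    {x : Matrix Ω Ω F} (hx : x ∈ A) (s : Finset F) :
    (Matrix.of fun a b => x a b * ∏ μ ∈ s, (x a b - μ)) ∈ A := by
  classical
  induction s using Finset.induction with
  | empty =>
      have : (Matrix.of fun a b => x a b * ∏ μ ∈ (∅ : Finset F), (x a b - μ)) = x := by
        ext a b; simp
      rw [this]; exact hx
  | insert μ s hμ ih =>
      have key : (Matrix.of fun a b => x a b * ∏ ν ∈ insert μ s, (x a b - ν)) =
          Matrix.hadamard x (Matrix.of fun a b => x a b * ∏ ν ∈ s, (x a b - ν)) -
            μ • (Matrix.of fun a b => x a b * ∏ ν ∈ s, (x a b - ν)) := by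
        ext a b
        simp only [Matrix.of_apply, Matrix.hadamard_apply, Matrix.sub_apply, Matrix.smul_apply,
          smul_eq_mul, Finset.prod_insert hμ]
        ring
      rw [key]
      exact A.sub_mem (hHad _ hx _ ih) (A.smul_mem _ ih)

lemma indicator_mem (A : Submodule F (Matrix Ω Ω F))
    (hHad : ∀ x ∈ A, ∀ y ∈ A, Matrix.hadamard x y ∈ A)
    {x : Matrix Ω Ω F} (hx : x ∈ A) {lam : F} (hlam : lam ≠ 0) :
    (Matrix.of fun a b => if x a b = lam then (1 : F) else 0) ∈ A := by
  classical
  set s : Finset F := (Finset.univ.image fun p : Ω × Ω => x p.1 p.2) \ {0, lam} with hs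
  have hz := poly_mem A hHad hx s
  set c : F := lam * ∏ μ ∈ s, (lam - μ) with hc
  have hcne : c ≠ 0 := by
    refine mul_ne_zero hlam (Finset.prod_ne_zero_iff.2 fun μ hμ => sub_ne_zero.2 fun h => ?_)
    rw [hs] at hμ
    simp only [Finset.mem_sdiff, Finset.mem_insert, Finset.mem_singleton] at hμ
    exact hμ.2 (Or.inr h.symm)
  have heq : (Matrix.of fun a b => if x a b = lam then (1 : F) else 0) =
      c⁻¹ • (Matrix.of fun a b => x a b * ∏ μ ∈ s, (x a b - μ)) := by
    ext a b
    simp only [Matrix.of_apply, Matrix.smul_apply, smul_eq_mul]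
    by_cases h : x a b = lam
    · rw [if_pos h, h, ← hc]
      exact (inv_mul_cancel₀ hcne).symm
    · rw [if_neg h]
      by_cases h0 : x a b = 0
      · rw [h0]; simp
      · have hmem : x a b ∈ s := by
          rw [hs]
          refine Finset.mem_sdiff.2 ⟨Finset.mem_image.2 ⟨(a, b), Finset.mem_univ _, rfl⟩, ?_⟩
          simp [h0, h]
        rw [Finset.prod_eq_zero hmem (sub_self _), mul_zero, mul_zero]
  rw [heq]
  exact A.smul_mem _ hz

lemma fold_mem (A : Submodule F (Matrix Ω Ω F))
    (hHad : ∀ x ∈ A, ∀ y ∈ A, Matrix.hadamard x y ∈ A)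
    {g : Matrix Ω Ω F} (hg : g ∈ ESet A) (s : Ω × Ω) (t : Finset (Matrix Ω Ω F)) :
    ↑t ⊆ ESet A →
    (Matrix.of fun a b => if g a b = 1 ∧ ∀ e ∈ t, e a b = e s.1 s.2 then (1 : F) else 0) ∈ A := by
  classical
  induction t using Finset.induction with
  | empty =>
      intro _
      have : (Matrix.of fun a b =>
          if g a b = 1 ∧ ∀ e ∈ (∅ : Finset (Matrix Ω Ω F)), e a b = e s.1 s.2 then (1 : F) else 0)
          = g := by
        ext a b
        simp only [Matrix.of_apply, Finset.notMem_empty, false_implies, implies_true, and_true]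
        rcases hg.2 a b with h | h
        · rw [h, if_neg (zero_ne_one (α := F))]
        · rw [h, if_pos rfl]
      rw [this]; exact hg.1
  | insert e t hni ih =>
      intro ht
      have hE : e ∈ ESet A := ht (by simp)
      have ht' : ↑t ⊆ ESet A := fun f hf => ht (by simp [hf])
      have hprev := ih ht'
      set P : Matrix Ω Ω F :=
        Matrix.of fun a b => if g a b = 1 ∧ ∀ f ∈ t, f a b = f s.1 s.2 then (1 : F) else 0 with hP
      rcases hE.2 s.1 s.2 with hs0 | hs1
      · have key : (Matrix.of fun a b =>
            if g a b = 1 ∧ ∀ f ∈ insert e t, f a b = f s.1 s.2 then (1 : F) else 0)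
            = P - Matrix.hadamard P e := by
          ext a b
          simp only [Matrix.of_apply, Matrix.sub_apply, Matrix.hadamard_apply, hP,
            Finset.forall_mem_insert]
          rcases hE.2 a b with hab | hab <;>
            rcases Classical.em (g a b = 1 ∧ ∀ f ∈ t, f a b = f s.1 s.2) with hcon | hcon
          · rw [if_pos ⟨hcon.1, ⟨hab.trans hs0.symm, hcon.2⟩⟩, if_pos hcon, hab]; ring
          · rw [if_neg, if_neg hcon]
            · ring
            · intro hcon'; exact hcon ⟨hcon'.1, hcon'.2.2⟩
          · rw [if_neg, if_pos hcon, hab]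
            · ring
            · intro hcon'
              exact one_ne_zero (hab.symm.trans (hcon'.2.1.trans hs0))
          · rw [if_neg, if_neg hcon, hab]
            · ring
            · intro hcon'; exact hcon ⟨hcon'.1, hcon'.2.2⟩
        rw [key]
        exact A.sub_mem hprev (hHad _ hprev _ hE.1)
      · have key : (Matrix.of fun a b =>
            if g a b = 1 ∧ ∀ f ∈ insert e t, f a b = f s.1 s.2 then (1 : F) else 0)
            = Matrix.hadamard P e := by
          ext a b
          simp only [Matrix.of_apply, Matrix.hadamard_apply, hP, Finset.forall_mem_insert]
          rcases hE.2 a b with hab | hab <;>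
            rcases Classical.em (g a b = 1 ∧ ∀ f ∈ t, f a b = f s.1 s.2) with hcon | hcon
          · rw [if_neg, if_pos hcon, hab, mul_zero]
            intro hcon'
            exact zero_ne_one (hab.symm.trans (hcon'.2.1.trans hs1))
          · rw [if_neg, if_neg hcon, hab, mul_zero]
            intro hcon'; exact hcon ⟨hcon'.1, hcon'.2.2⟩
          · rw [if_pos ⟨hcon.1, ⟨hab.trans hs1.symm, hcon.2⟩⟩, if_pos hcon, hab, one_mul]
          · rw [if_neg, if_neg hcon, hab, mul_one]
            intro hcon'; exact hcon ⟨hcon'.1, hcon'.2.2⟩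
        rw [key]
        exact hHad _ hprev _ hE.1

/-- A position is good if some 0-1 matrix in `A` is `1` there. -/
def goodPos (A : Submodule F (Matrix Ω Ω F)) (s : Ω × Ω) : Prop :=
  ∃ g ∈ ESet A, g s.1 s.2 = 1

lemma atomM_mem (A : Submodule F (Matrix Ω Ω F))
    (hHad : ∀ x ∈ A, ∀ y ∈ A, Matrix.hadamard x y ∈ A)
    {s : Ω × Ω} (hs : goodPos A s) : atomM A s ∈ A := by
  obtain ⟨g, hg, hg1⟩ := hs
  have h := fold_mem A hHad hg s (EFin A) (fun e he => mem_EFin.1 he)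
  have heq : atomM A s =
      Matrix.of fun a b => if g a b = 1 ∧ ∀ e ∈ EFin A, e a b = e s.1 s.2 then (1 : F) else 0 := by
    ext a b
    simp only [atomM, Matrix.of_apply]
    refine if_congr ⟨fun hh => ⟨(hh g hg).trans hg1, fun e he => hh e (mem_EFin.1 he)⟩,
      fun hh e he => hh.2 e (mem_EFin.2 he)⟩ rfl rfl
  rw [heq]; exact h

/-- The canonical basis of atoms. -/
noncomputable def BFin (A : Submodule F (Matrix Ω Ω F)) : Finset (Matrix Ω Ω F) :=
  (Finset.univ.filter (goodPos A)).image (atomM A)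

lemma mem_BFin {A : Submodule F (Matrix Ω Ω F)} {M : Matrix Ω Ω F} :
    M ∈ BFin A ↔ ∃ s, goodPos A s ∧ atomM A s = M := by
  simp [BFin]

lemma BFin_01 {A : Submodule F (Matrix Ω Ω F)} {M : Matrix Ω Ω F} (hM : M ∈ BFin A)
    (a b : Ω) : M a b = 0 ∨ M a b = 1 := by
  obtain ⟨s, -, rfl⟩ := mem_BFin.1 hM
  exact atomM_01 a b

lemma BFin_subset_ESet {A : Submodule F (Matrix Ω Ω F)}
    (hHad : ∀ x ∈ A, ∀ y ∈ A, Matrix.hadamard x y ∈ A)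
    {M : Matrix Ω Ω F} (hM : M ∈ BFin A) : M ∈ ESet A := by
  obtain ⟨s, hs, rfl⟩ := mem_BFin.1 hM
  exact ⟨atomM_mem A hHad hs, atomM_01⟩

lemma eq_atom_of_one {A : Submodule F (Matrix Ω Ω F)} {M : Matrix Ω Ω F} (hM : M ∈ BFin A)
    {p q : Ω} (h : M p q = 1) : M = atomM A (p, q) := by
  obtain ⟨s, -, rfl⟩ := mem_BFin.1 hM
  exact atomM_eq h

lemma BFin_disj {A : Submodule F (Matrix Ω Ω F)} {M N : Matrix Ω Ω F}
    (hM : M ∈ BFin A) (hN : N ∈ BFin A) (hMN : M ≠ N) (a b : Ω) :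
    M a b = 0 ∨ N a b = 0 := by
  by_contra hc
  push_neg at hc
  have hM1 : M a b = 1 := (BFin_01 hM a b).resolve_left hc.1
  have hN1 : N a b = 1 := (BFin_01 hN a b).resolve_left hc.2
  exact hMN ((eq_atom_of_one hM hM1).trans (eq_atom_of_one hN hN1).symm)

lemma sum_atoms (A : Submodule F (Matrix Ω Ω F)) {e : Matrix Ω Ω F} (he : e ∈ ESet A) :
    ∑ a ∈ (BFin A).filter (fun a => ∀ p q, a p q = 1 → e p q = 1), a = e := by
  classical
  ext p q
  rw [Matrix.sum_apply]
  rcases he.2 p q with h0 | h1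
  · rw [h0]
    refine Finset.sum_eq_zero fun a ha => ?_
    obtain ⟨haB, hle⟩ := Finset.mem_filter.1 ha
    rcases BFin_01 haB p q with h | h
    · exact h
    · exact absurd ((hle p q h).symm.trans h0) one_ne_zero
  · rw [h1]
    have hgood : goodPos A (p, q) := ⟨e, he, h1⟩
    have hmem : atomM A (p, q) ∈
        (BFin A).filter (fun a => ∀ u v, a u v = 1 → e u v = 1) := by
      refine Finset.mem_filter.2 ⟨mem_BFin.2 ⟨(p, q), hgood, rfl⟩, fun u v h => ?_⟩
      rw [atomM_le he h]; exact h1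
    rw [Finset.sum_eq_single_of_mem _ hmem]
    · exact atomM_self
    · intro b hb hne
      rcases BFin_01 (Finset.mem_filter.1 hb).1 p q with h | h
      · exact h
      · exact absurd (eq_atom_of_one (Finset.mem_filter.1 hb).1 h) hne

lemma BFin_li (A : Submodule F (Matrix Ω Ω F)) :
    LinearIndependent F (fun M : {x // x ∈ BFin A} => (M : Matrix Ω Ω F)) := by
  rw [linearIndependent_iff']
  intro s g hsum i hi
  obtain ⟨t, -, hrep⟩ := mem_BFin.1 i.2
  have hone : (i : Matrix Ω Ω F) t.1 t.2 = 1 := by rw [← hrep]; exact atomM_self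
  have hv : (∑ j ∈ s, g j • (j : Matrix Ω Ω F)) t.1 t.2 = g i := by
    rw [Matrix.sum_apply]
    rw [Finset.sum_eq_single_of_mem i hi]
    · rw [Matrix.smul_apply, hone, smul_eq_mul, mul_one]
    · intro j hj hne
      rw [Matrix.smul_apply, smul_eq_mul]
      have hji : (j : Matrix Ω Ω F) ≠ (i : Matrix Ω Ω F) := fun h => hne (Subtype.ext h)
      rcases BFin_01 j.2 t.1 t.2 with h | h
      · rw [h, mul_zero]
      · exfalso
        apply hji
        rw [eq_atom_of_one j.2 h, ← hrep]
  rw [hsum] at hv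
  simp only [Matrix.zero_apply] at hv
  exact hv.symm

lemma mem_span_BFin (A : Submodule F (Matrix Ω Ω F))
    {e : Matrix Ω Ω F} (he : e ∈ ESet A) :
    e ∈ Submodule.span F (↑(BFin A) : Set (Matrix Ω Ω F)) := by
  rw [← sum_atoms A he]
  exact Submodule.sum_mem _ fun a ha =>
    Submodule.subset_span (Finset.mem_filter.1 ha).1

lemma BFin_span (A : Submodule F (Matrix Ω Ω F))
    (hHad : ∀ x ∈ A, ∀ y ∈ A, Matrix.hadamard x y ∈ A) :
    Submodule.span F (↑(BFin A) : Set (Matrix Ω Ω F)) = A := by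
  classical
  apply le_antisymm
  · rw [Submodule.span_le]
    intro M hM
    exact (BFin_subset_ESet hHad hM).1
  · intro x hx
    set vals : Finset F := (Finset.univ.image fun p : Ω × Ω => x p.1 p.2).erase 0 with hvals
    have hxeq : x = ∑ lam ∈ vals,
        lam • (Matrix.of fun a b => if x a b = lam then (1 : F) else 0) := by
      ext a b
      rw [Matrix.sum_apply]
      by_cases h0 : x a b = 0
      · rw [h0]
        refine (Finset.sum_eq_zero fun lam hlam => ?_).symm
        have hne : lam ≠ 0 := Finset.ne_of_mem_erase hlam
        rw [Matrix.smul_apply, Matrix.of_apply, if_neg (by rw [h0]; exact fun h => hne h.symm),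
          smul_zero]
      · rw [Finset.sum_eq_single_of_mem (x a b)
          (Finset.mem_erase.2 ⟨h0, Finset.mem_image.2 ⟨(a, b), Finset.mem_univ _, rfl⟩⟩)]
        · rw [Matrix.smul_apply, Matrix.of_apply, if_pos rfl, smul_eq_mul, mul_one]
        · intro lam hlam hne
          rw [Matrix.smul_apply, Matrix.of_apply, if_neg (fun h => hne h.symm), smul_zero]
    rw [hxeq]
    refine Submodule.sum_mem _ fun lam hlam => Submodule.smul_mem _ _ ?_
    have hne : lam ≠ 0 := Finset.ne_of_mem_erase hlam
    exact mem_span_BFin A ⟨indicator_mem A hHad hx hne, fun a b => by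
      simp only [Matrix.of_apply]; split_ifs <;> simp⟩

lemma goodBasis_eq (A : Submodule F (Matrix Ω Ω F))
    (hHad : ∀ x ∈ A, ∀ y ∈ A, Matrix.hadamard x y ∈ A)
    {B' : Finset (Matrix Ω Ω F)} (h : GoodBasis A B') : B' = BFin A := by
  classical
  obtain ⟨h01, hdisj, hli, hspan⟩ := h
  have hsub : B' ⊆ BFin A := by
    intro M hM
    have hM01 : ∀ a b, M a b = 0 ∨ M a b = 1 := h01 M hM
    have hMA : M ∈ A := hspan ▸ Submodule.subset_span (Finset.mem_coe.2 hM)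
    have hME : M ∈ ESet A := ⟨hMA, hM01⟩
    have hMne : M ≠ 0 := hli.ne_zero ⟨M, hM⟩
    obtain ⟨p, q, hpq⟩ : ∃ p q, M p q = 1 := by
      by_contra hc
      push_neg at hc
      apply hMne
      ext a b
      rcases hM01 a b with hz | hz
      · rw [hz, Matrix.zero_apply]
      · exact absurd hz (hc a b)
    have hgood : goodPos A (p, q) := ⟨M, hME, hpq⟩
    have haB : atomM A (p, q) ∈ BFin A := mem_BFin.2 ⟨(p, q), hgood, rfl⟩
    have hale : ∀ u v, atomM A (p, q) u v = 1 → M u v = 1 := fun u v hh => by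
      rw [atomM_le hME hh]; exact hpq
    have haA : atomM A (p, q) ∈ Submodule.span F (↑B' : Set (Matrix Ω Ω F)) := by
      rw [hspan]; exact atomM_mem A hHad hgood
    obtain ⟨f, -, hf⟩ := Submodule.mem_span_finset.1 haA
    have heval : ∀ u v, M u v = 1 → (∑ N ∈ B', f N • N) u v = f M := by
      intro u v huv
      rw [Matrix.sum_apply, Finset.sum_eq_single_of_mem M hM]
      · rw [Matrix.smul_apply, huv, smul_eq_mul, mul_one]
      · intro N hN hne
        rw [Matrix.smul_apply, smul_eq_mul]
        rcases hdisj M hM N hN hne.symm u v with hz | hz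
        · exact absurd (hz.symm.trans huv) zero_ne_one
        · rw [hz, mul_zero]
    have hA1 : atomM A (p, q) p q = 1 := atomM_apply_eq_one.2 fun e _ => rfl
    have hfM : f M = 1 := by
      have h1 := heval p q hpq
      rw [hf, hA1] at h1
      exact h1.symm
    have hMle : ∀ u v, M u v = 1 → atomM A (p, q) u v = 1 := by
      intro u v huv
      have h2 := heval u v huv
      rw [hf] at h2
      rw [h2, hfM]
    have hMeq : M = atomM A (p, q) := by
      ext u v
      rcases hM01 u v with hz | hz
      · rcases atomM_01 (A := A) (s := (p, q)) u v with hz' | hz'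
        · rw [hz, hz']
        · exact absurd ((hale u v hz').symm.trans hz) one_ne_zero
      · rw [hz, hMle u v hz]
    rw [hMeq]; exact haB
  have e1 : Module.finrank F (Submodule.span F (↑B' : Set (Matrix Ω Ω F))) = B'.card :=
    finrank_span_finset_eq_card hli
  have e2 : Module.finrank F (Submodule.span F (↑(BFin A) : Set (Matrix Ω Ω F)))
      = (BFin A).card := finrank_span_finset_eq_card (BFin_li A)
  rw [hspan] at e1
  rw [BFin_span A hHad] at e2
  exact Finset.eq_of_subset_of_card_le hsub (by rw [← e1, ← e2])

end Aux


theorem statement0 {F : Type*} [Field F] (hchar : ringChar F ≠ 2)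
    {Ω : Type*} [Fintype Ω] [DecidableEq Ω] [Nonempty Ω]
    (A : Submodule F (Matrix Ω Ω F))
    (hHad : ∀ x ∈ A, ∀ y ∈ A, Matrix.hadamard x y ∈ A) :
    ∃ B : Finset (Matrix Ω Ω F),
      GoodBasis A B ∧
      (∀ B' : Finset (Matrix Ω Ω F), GoodBasis A B' → B' = B) ∧
      ((1 : Matrix Ω Ω F) ∈ A → ∃ S : Finset (Matrix Ω Ω F), S ⊆ B ∧
        (1 : Matrix Ω Ω F) = ∑ M ∈ S, M) ∧
      ((allOnes F : Matrix Ω Ω F) ∈ A → ∑ M ∈ B, M = (allOnes F : Matrix Ω Ω F)) ∧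
      ((∀ x ∈ A, xᵀ ∈ A) → ∀ M ∈ B, Mᵀ ∈ B) := by
  classical
  refine ⟨BFin A, ⟨fun M hM => BFin_01 hM, fun M hM N hN h => BFin_disj hM hN h,
    BFin_li A, BFin_span A hHad⟩, fun B' hB' => goodBasis_eq A hHad hB', ?_, ?_, ?_⟩
  · intro h1A
    have hE : (1 : Matrix Ω Ω F) ∈ ESet A :=
      ⟨h1A, fun a b => by by_cases h : a = b <;> simp [Matrix.one_apply, h]⟩
    exact ⟨(BFin A).filter (fun a => ∀ p q, a p q = 1 → (1 : Matrix Ω Ω F) p q = 1),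
      Finset.filter_subset _ _, (sum_atoms A hE).symm⟩
  · intro hJ
    have hE : allOnes F ∈ ESet A := ⟨hJ, fun a b => Or.inr rfl⟩
    have hsum := sum_atoms A hE
    have hft : Finset.filter (fun a => ∀ (p q : Ω), a p q = 1 → allOnes F p q = 1) (BFin A)
        = BFin A := Finset.filter_true_of_mem (fun a _ p q _ => rfl)
    rw [hft] at hsum
    exact hsum
  · intro hT M hM
    obtain ⟨s, hgood, rfl⟩ := mem_BFin.1 hM
    have hTE : ∀ e ∈ ESet A, eᵀ ∈ ESet A := fun e he => ⟨hT e he.1, fun a b => he.2 b a⟩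
    have hgood' : goodPos A (s.2, s.1) := by
      obtain ⟨g, hg, h1⟩ := hgood
      exact ⟨gᵀ, hTE g hg, h1⟩
    have heq : (atomM A s)ᵀ = atomM A (s.2, s.1) := by
      ext a b
      simp only [Matrix.transpose_apply, atomM, Matrix.of_apply]
      refine if_congr ⟨fun h e he => ?_, fun h e he => ?_⟩ rfl rfl
      · have h2 := h eᵀ (hTE e he)
        simpa using h2
      · have h2 := h eᵀ (hTE e he)
        simpa using h2
    rw [heq]
    exact mem_BFin.2 ⟨(s.2, s.1), hgood', rfl⟩


end JordanPaper

end
end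

section
/- Let F be a field with char F ≠ 2, Ω a nonempty finite set, and A ⊆ M_Ω(F) a linear subspace which contains I_Ω and J_Ω and is closed under transposition and under the Hadamard product. Then there exists a unique partition C = {C_1,...,C_r} of Ω×Ω such that A equals the linear span of the adjacency matrices of C_1,...,C_r. Moreover this partition is a rainbow: the diagonal relation 1_Ω = {(ω,ω) : ω ∈ Ω} is a union of classes of C, and {C_1^T,...,C_r^T} = {C_1,...,C_r}. -/
open Matrix

noncomputable section

namespace JordanPaper

open scoped Classical

variable {Ω : Type*}

section Aux

variable {F : Type*} [Field F] {Ω : Type*} [Fintype Ω] [DecidableEq Ω]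
variable (A : Submodule F (Matrix Ω Ω F))

/-- Two pairs are related iff every matrix in `A` agrees at them. -/
def rel (p q : Ω × Ω) : Prop := ∀ x ∈ A, x p.1 p.2 = x q.1 q.2

lemma rel_refl (p : Ω × Ω) : rel A p p := fun _ _ => rfl

lemma rel_symm {p q : Ω × Ω} (h : rel A p q) : rel A q p := fun x hx => (h x hx).symm

lemma rel_trans {p q r : Ω × Ω} (h : rel A p q) (h' : rel A q r) : rel A p r :=
  fun x hx => (h x hx).trans (h' x hx)

/-- The class of `p`. -/
def cls (p : Ω × Ω) : Set (Ω × Ω) := {q | rel A p q}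

lemma mem_cls_self (p : Ω × Ω) : p ∈ cls A p := rel_refl A p

lemma cls_eq_of_rel {p q : Ω × Ω} (h : rel A p q) : cls A p = cls A q := by
  ext r
  exact ⟨fun hr => rel_trans A (rel_symm A h) hr, fun hr => rel_trans A h hr⟩

lemma hadamard_prod_mem (hJ : allOnes F ∈ A)
    (hHad : ∀ x ∈ A, ∀ y ∈ A, Matrix.hadamard x y ∈ A)
    {ι : Type*} (S : Finset ι) (f : ι → Matrix Ω Ω F)
    (hf : ∀ q ∈ S, f q ∈ A) :
    (Matrix.of fun a b => ∏ q ∈ S, f q a b) ∈ A := by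
  classical
  induction S using Finset.induction with
  | empty =>
      have : (Matrix.of fun a b : Ω => ∏ q ∈ (∅ : Finset ι), f q a b) = allOnes F := by
        ext a b; simp [allOnes]
      rw [this]; exact hJ
  | @insert i s his ih =>
      have h1 : f i ∈ A := hf i (Finset.mem_insert_self i s)
      have h2 : (Matrix.of fun a b => ∏ q ∈ s, f q a b) ∈ A :=
        ih fun q hq => hf q (Finset.mem_insert_of_mem hq)
      have heq : (Matrix.of fun a b => ∏ q ∈ insert i s, f q a b) =
          Matrix.hadamard (f i) (Matrix.of fun a b => ∏ q ∈ s, f q a b) := by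
        ext a b; simp [Matrix.hadamard, Finset.prod_insert his]
      rw [heq]; exact hHad _ h1 _ h2

/-- Key lemma: the adjacency matrix of each class lies in `A`. -/
lemma adj_cls_mem (hJ : allOnes F ∈ A)
    (hHad : ∀ x ∈ A, ∀ y ∈ A, Matrix.hadamard x y ∈ A)
    (p : Ω × Ω) : adj F (cls A p) ∈ A := by
  classical
  have hsep : ∀ q : Ω × Ω, ¬ rel A p q → ∃ x, x ∈ A ∧ x p.1 p.2 ≠ x q.1 q.2 := by
    intro q hq
    by_contra h
    push_neg at h
    exact hq fun x hx => h x hx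
  choose x hxA hxne using hsep
  set e : Ω × Ω → Matrix Ω Ω F := fun q =>
    if h : ¬ rel A p q then
      (x q h p.1 p.2 - x q h q.1 q.2)⁻¹ • (x q h - x q h q.1 q.2 • allOnes F)
    else allOnes F with he
  have heA : ∀ q, e q ∈ A := by
    intro q
    by_cases h : ¬ rel A p q
    · simp only [he, dif_pos h]
      exact A.smul_mem _ (A.sub_mem (hxA q h) (A.smul_mem _ hJ))
    · simp only [he, dif_neg h]; exact hJ
  have hep : ∀ q (h : ¬ rel A p q), e q p.1 p.2 = 1 := by
    intro q h
    have hd : x q h p.1 p.2 - x q h q.1 q.2 ≠ 0 := sub_ne_zero.2 (hxne q h)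
    simp only [he, dif_pos h, Matrix.smul_apply, Matrix.sub_apply, smul_eq_mul]
    show (x q h p.1 p.2 - x q h q.1 q.2)⁻¹ * (x q h p.1 p.2 - x q h q.1 q.2 * allOnes F p.1 p.2) = 1
    have : allOnes F p.1 p.2 = (1 : F) := rfl
    rw [this, mul_one]
    exact inv_mul_cancel₀ hd
  have heq : ∀ q (h : ¬ rel A p q), e q q.1 q.2 = 0 := by
    intro q h
    simp only [he, dif_pos h, Matrix.smul_apply, Matrix.sub_apply, smul_eq_mul]
    show (x q h p.1 p.2 - x q h q.1 q.2)⁻¹ * (x q h q.1 q.2 - x q h q.1 q.2 * allOnes F q.1 q.2) = 0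
    have : allOnes F q.1 q.2 = (1 : F) := rfl
    rw [this, mul_one, sub_self, mul_zero]
  set S : Finset (Ω × Ω) := Finset.univ.filter (fun q => ¬ rel A p q) with hS
  have hmem : (Matrix.of fun a b => ∏ q ∈ S, e q a b) ∈ A :=
    hadamard_prod_mem A hJ hHad S e fun q _ => heA q
  have : adj F (cls A p) = (Matrix.of fun a b => ∏ q ∈ S, e q a b) := by
    ext a b
    by_cases hab : rel A p (a, b)
    · have h1 : adj F (cls A p) a b = 1 := by simp [adj, cls, hab]
      rw [h1]
      show (1 : F) = ∏ q ∈ S, e q a b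
      symm
      apply Finset.prod_eq_one
      intro q hq
      have hq' : ¬ rel A p q := (Finset.mem_filter.1 hq).2
      have := hab (e q) (heA q)
      rw [← this]
      exact hep q hq'
    · have h1 : adj F (cls A p) a b = 0 := by simp [adj, cls, hab]
      rw [h1]
      show (0 : F) = ∏ q ∈ S, e q a b
      symm
      apply Finset.prod_eq_zero (i := (a, b))
      · exact Finset.mem_filter.2 ⟨Finset.mem_univ _, hab⟩
      · exact heq (a, b) hab
  rw [this]; exact hmem

/-- Every element of `A` is in the span of the class adjacency matrices. -/
lemma mem_span_adj {x : Matrix Ω Ω F} (hx : x ∈ A) :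
    x ∈ Submodule.span F (adj F '' Set.range (cls A)) := by
  classical
  set val : Set (Ω × Ω) → F := fun c =>
    if h : c.Nonempty then x h.choose.1 h.choose.2 else 0 with hval
  have hx_eq : x = ∑ c ∈ Finset.univ.image (cls A), val c • adj F c := by
    ext a b
    rw [Matrix.sum_apply]
    have : ∀ c ∈ Finset.univ.image (cls A), c ≠ cls A (a, b) →
        (val c • adj F c) a b = 0 := by
      intro c hc hne
      rcases Finset.mem_image.1 hc with ⟨q, _, rfl⟩
      have hab : (a, b) ∉ cls A q := by
        intro h
        exact hne (cls_eq_of_rel A h)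
      simp [adj, hab]
    rw [Finset.sum_eq_single (cls A (a, b)) this
      (fun h => absurd (Finset.mem_image.2 ⟨(a, b), Finset.mem_univ _, rfl⟩) h)]
    have hne : (cls A (a, b)).Nonempty := ⟨(a, b), mem_cls_self A _⟩
    have hch : hne.choose ∈ cls A (a, b) := hne.choose_spec
    have : val (cls A (a, b)) = x a b := by
      rw [hval]
      simp only [dif_pos hne]
      exact (hch x hx).symm
    simp [adj, mem_cls_self A (a, b), this]
  rw [hx_eq]
  apply Submodule.sum_mem
  intro c hc
  rcases Finset.mem_image.1 hc with ⟨q, _, rfl⟩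
  exact Submodule.smul_mem _ _ (Submodule.subset_span ⟨cls A q, ⟨q, rfl⟩, rfl⟩)

end Aux

theorem statement1 {F : Type*} [Field F] (hchar : ringChar F ≠ 2)
    {Ω : Type*} [Fintype Ω] [DecidableEq Ω] [Nonempty Ω]
    (A : Submodule F (Matrix Ω Ω F))
    (hI : (1 : Matrix Ω Ω F) ∈ A) (hJ : (allOnes F : Matrix Ω Ω F) ∈ A)
    (hT : ∀ x ∈ A, xᵀ ∈ A)
    (hHad : ∀ x ∈ A, ∀ y ∈ A, Matrix.hadamard x y ∈ A) :
    ∃ P : Set (Set (Ω × Ω)),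
      IsPartition P ∧
      A = Submodule.span F (adj F '' P) ∧
      (∀ Q : Set (Set (Ω × Ω)), IsPartition Q → A = Submodule.span F (adj F '' Q) → Q = P) ∧
      (∀ c ∈ P, (c ∩ diagRel (Set.univ : Set Ω)).Nonempty → c ⊆ diagRel (Set.univ : Set Ω)) ∧
      (∀ c ∈ P, transposeRel c ∈ P) := by
  classical
  refine ⟨Set.range (cls A), ?_, ?_, ?_, ?_, ?_⟩
  · -- partition
    refine ⟨?_, ?_, ?_⟩
    · rintro c ⟨p, rfl⟩; exact ⟨p, mem_cls_self A p⟩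
    · rintro c ⟨p, rfl⟩ d ⟨q, rfl⟩ hne
      by_contra h
      rcases Set.nonempty_iff_ne_empty.2 h with ⟨r, hr1, hr2⟩
      exact hne ((cls_eq_of_rel A hr1).trans (cls_eq_of_rel A hr2).symm)
    · ext p
      simp only [Set.mem_sUnion, Set.mem_univ, iff_true]
      exact ⟨cls A p, ⟨p, rfl⟩, mem_cls_self A p⟩
  · -- A = span
    apply le_antisymm
    · intro x hx; exact mem_span_adj A hx
    · rw [Submodule.span_le]
      rintro m ⟨c, ⟨p, rfl⟩, rfl⟩
      exact adj_cls_mem A hJ hHad p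
  · -- uniqueness
    intro Q hQ hspan
    have hadjQ : ∀ c ∈ Q, adj F c ∈ A := by
      intro c hc
      rw [hspan]
      exact Submodule.subset_span ⟨c, hc, rfl⟩
    have hkey : ∀ c ∈ Q, ∀ p ∈ c, c = cls A p := by
      intro c hc p hp
      apply Set.eq_of_subset_of_subset
      · intro q hq
        -- rel A p q
        show ∀ x ∈ A, x p.1 p.2 = x q.1 q.2
        intro x hx
        rw [hspan] at hx
        induction hx using Submodule.span_induction with
        | mem m hm =>
            rcases hm with ⟨d, hd, rfl⟩
            by_cases hdc : d = c
            · subst hdc; simp [adj, hp, hq]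
            · have hdisj : c ∩ d = ∅ := hQ.2.1 c hc d hd (Ne.symm hdc)
              have hpd : p ∉ d := fun h => by
                have : p ∈ c ∩ d := ⟨hp, h⟩; rw [hdisj] at this; exact this
              have hqd : q ∉ d := fun h => by
                have : q ∈ c ∩ d := ⟨hq, h⟩; rw [hdisj] at this; exact this
              simp [adj, hpd, hqd]
        | zero => simp
        | add y z _ _ hy hz => simp [Matrix.add_apply, hy, hz]
        | smul a y _ hy => simp [Matrix.smul_apply, hy]
      · intro q hq
        have h1 : adj F c p.1 p.2 = adj F c q.1 q.2 := hq (adj F c) (hadjQ c hc)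
        have h2 : adj F c p.1 p.2 = (1 : F) := by simp [adj, hp]
        by_contra hqc
        have h3 : adj F c q.1 q.2 = (0 : F) := by simp [adj, hqc]
        rw [h2, h3] at h1
        exact one_ne_zero h1
    apply Set.eq_of_subset_of_subset
    · intro c hc
      rcases hQ.1 c hc with ⟨p, hp⟩
      exact ⟨p, (hkey c hc p hp).symm⟩
    · rintro c ⟨p, rfl⟩
      have : p ∈ ⋃₀ Q := by rw [hQ.2.2]; trivial
      rcases this with ⟨d, hd, hpd⟩
      rwa [← hkey d hd p hpd]
  · -- diagonal
    rintro c ⟨p, rfl⟩ ⟨q, hq1, hq2⟩ r hr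
    have hq : q.1 = q.2 := hq2.1
    refine ⟨?_, trivial⟩
    have hrel : rel A q r := rel_trans A (rel_symm A hq1) hr
    have h1 : (1 : Matrix Ω Ω F) q.1 q.2 = (1 : Matrix Ω Ω F) r.1 r.2 := hrel _ hI
    by_contra hne
    rw [show (1 : Matrix Ω Ω F) q.1 q.2 = 1 by rw [hq, Matrix.one_apply_eq],
      Matrix.one_apply_ne hne] at h1
    exact one_ne_zero (α := F) h1
  · -- transpose
    rintro c ⟨p, rfl⟩
    refine ⟨(p.2, p.1), ?_⟩
    ext q
    show (∀ x ∈ A, x p.2 p.1 = x q.1 q.2) ↔ (q.2, q.1) ∈ cls A p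
    constructor
    · intro h x hx
      have := h xᵀ (hT x hx)
      simpa [Matrix.transpose_apply] using this
    · intro h x hx
      have := h xᵀ (hT x hx)
      simpa [Matrix.transpose_apply] using this

end JordanPaper

end
end

section
/- Let F be a field of characteristic 0, Ω a nonempty finite set, and A ⊆ M_Ω(F) a coherent J-algebra. Then there exists a unique partition C of Ω×Ω such that the adjacency matrices of the classes of C form a basis of A, and this partition is a Jordan configuration: it is a rainbow, and for all classes C, D ∈ C and all pairs (α,β), (α',β') lying in the same class of C one has |C(α)∩D^T(β)| + |D(α)∩C^T(β)| = |C(α')∩D^T(β')| + |D(α')∩C^T(β')|, where C(α) := {β : (α,β) ∈ C}. -/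
open Matrix

noncomputable section

namespace JordanPaper

open scoped Classical

variable {Ω : Type*}

section Aux
variable {F : Type*} [Field F] {Ω : Type*} [Fintype Ω] [DecidableEq Ω]

/-- class of p under the relation "all matrices of A agree". -/
def classRel (A : Submodule F (Matrix Ω Ω F)) (p : Ω × Ω) : Set (Ω × Ω) :=
  {q | ∀ x ∈ A, x q.1 q.2 = x p.1 p.2}

lemma self_mem_classRel (A : Submodule F (Matrix Ω Ω F)) (p : Ω × Ω) :
    p ∈ classRel A p := fun _ _ => rfl

lemma classRel_eq_of_mem {A : Submodule F (Matrix Ω Ω F)} {p q : Ω × Ω}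
    (hq : q ∈ classRel A p) : classRel A q = classRel A p := by
  ext r
  constructor
  · intro hr x hx; rw [hr x hx, hq x hx]
  · intro hr x hx; rw [hr x hx, ← hq x hx]

lemma hadProd_mem (A : Submodule F (Matrix Ω Ω F))
    (hH : ∀ x ∈ A, ∀ y ∈ A, Matrix.hadamard x y ∈ A) (hJ : allOnes F ∈ A)
    {ι : Type*} (T : Finset ι) (g : ι → Matrix Ω Ω F) (hg : ∀ i ∈ T, g i ∈ A) :
    (Matrix.of fun a b => ∏ i ∈ T, g i a b) ∈ A := by
  induction T using Finset.induction_on with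
  | empty =>
    have : (Matrix.of fun a b => ∏ i ∈ (∅ : Finset ι), g i a b) = allOnes F := by
      ext a b; simp [allOnes]
    rw [this]; exact hJ
  | insert j T hnot ih =>
    have h1 : g j ∈ A := hg j (Finset.mem_insert_self j T)
    have h2 := ih (fun i hi => hg i (Finset.mem_insert_of_mem hi))
    have : (Matrix.of fun a b => ∏ i ∈ insert j T, g i a b)
        = Matrix.hadamard (g j) (Matrix.of fun a b => ∏ i ∈ T, g i a b) := by
      ext a b; simp [Matrix.hadamard_apply, Finset.prod_insert hnot]
    rw [this]; exact hH _ h1 _ h2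

lemma indicator_level_mem (A : Submodule F (Matrix Ω Ω F))
    (hH : ∀ x ∈ A, ∀ y ∈ A, Matrix.hadamard x y ∈ A) (hJ : allOnes F ∈ A)
    {x : Matrix Ω Ω F} (hx : x ∈ A) (v : F) :
    (Matrix.of fun a b => if x a b = v then (1 : F) else 0) ∈ A := by
  classical
  set s : Finset F := Finset.image (fun p : Ω × Ω => x p.1 p.2) Finset.univ with hs
  set g : F → Matrix Ω Ω F := fun w => (v - w)⁻¹ • (x - w • allOnes F) with hg
  by_cases hv : v ∈ s
  · have key : (Matrix.of fun a b => if x a b = v then (1 : F) else 0)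
        = Matrix.of fun a b => ∏ w ∈ s.erase v, g w a b := by
      ext a b
      have hxs : x a b ∈ s := Finset.mem_image.2 ⟨(a, b), Finset.mem_univ _, rfl⟩
      have hterm : ∀ w, g w a b = (v - w)⁻¹ * (x a b - w) := by
        intro w
        simp [hg, Matrix.smul_apply, Matrix.sub_apply, allOnes, smul_eq_mul, mul_one]
      simp only [Matrix.of_apply, hterm]
      by_cases hab : x a b = v
      · rw [if_pos hab, eq_comm]
        apply Finset.prod_eq_one
        intro w hw
        have hwv : w ≠ v := (Finset.mem_erase.1 hw).1
        rw [hab]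
        exact inv_mul_cancel₀ (sub_ne_zero.2 (Ne.symm hwv))
      · rw [if_neg hab, eq_comm]
        have hmem : x a b ∈ s.erase v := Finset.mem_erase.2 ⟨hab, hxs⟩
        exact Finset.prod_eq_zero hmem (by simp)
    rw [key]
    exact hadProd_mem A hH hJ _ _
      (fun w _ => A.smul_mem _ (A.sub_mem hx (A.smul_mem _ hJ)))
  · have : (Matrix.of fun a b => if x a b = v then (1 : F) else 0) = 0 := by
      ext a b
      have hxs : x a b ∈ s := Finset.mem_image.2 ⟨(a, b), Finset.mem_univ _, rfl⟩
      have : x a b ≠ v := fun h => hv (h ▸ hxs)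
      simp [this]
    rw [this]; exact A.zero_mem

lemma classIndicator_mem (A : Submodule F (Matrix Ω Ω F))
    (hH : ∀ x ∈ A, ∀ y ∈ A, Matrix.hadamard x y ∈ A) (hJ : allOnes F ∈ A)
    (p : Ω × Ω) (T : Finset (Matrix Ω Ω F)) (hT : ∀ x ∈ T, x ∈ A) :
    (Matrix.of fun a b => if (∀ x ∈ T, x a b = x p.1 p.2) then (1 : F) else 0) ∈ A := by
  induction T using Finset.induction_on with
  | empty =>
    have : (Matrix.of fun a b =>
        if (∀ x ∈ (∅ : Finset (Matrix Ω Ω F)), x a b = x p.1 p.2) then (1 : F) else 0)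
        = allOnes F := by
      ext a b; simp [allOnes]
    rw [this]; exact hJ
  | insert y T hnot ih =>
    have h1 := indicator_level_mem A hH hJ (hT y (Finset.mem_insert_self y T)) (y p.1 p.2)
    have h2 := ih (fun z hz => hT z (Finset.mem_insert_of_mem hz))
    have key : (Matrix.of fun a b =>
        if (∀ x ∈ insert y T, x a b = x p.1 p.2) then (1 : F) else 0)
        = Matrix.hadamard (Matrix.of fun a b => if y a b = y p.1 p.2 then (1 : F) else 0)
            (Matrix.of fun a b => if (∀ x ∈ T, x a b = x p.1 p.2) then (1 : F) else 0) := by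
      ext a b
      simp only [Matrix.hadamard_apply, Matrix.of_apply, Finset.forall_mem_insert]
      by_cases hy : y a b = y p.1 p.2 <;> by_cases hrest : ∀ x ∈ T, x a b = x p.1 p.2 <;>
        simp [hy, hrest]
    rw [key]; exact hH _ h1 _ h2

lemma adj_classRel_mem (A : Submodule F (Matrix Ω Ω F))
    (hH : ∀ x ∈ A, ∀ y ∈ A, Matrix.hadamard x y ∈ A) (hJ : allOnes F ∈ A)
    (p : Ω × Ω) : adj F (classRel A p) ∈ A := by
  obtain ⟨S, hS⟩ : A.FG := IsNoetherian.noetherian A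
  have hSA : ∀ x ∈ S, x ∈ A := fun x hx => hS ▸ Submodule.subset_span hx
  have key : adj F (classRel A p)
      = Matrix.of fun a b => if (∀ x ∈ S, x a b = x p.1 p.2) then (1 : F) else 0 := by
    ext a b
    simp only [adj, Matrix.of_apply]
    have hiff : (a, b) ∈ classRel A p ↔ ∀ x ∈ S, x a b = x p.1 p.2 := by
      constructor
      · intro h x hx; exact h x (hSA x hx)
      · intro h x hx
        rw [← hS] at hx
        induction hx using Submodule.span_induction with
        | mem z hz => exact h z hz
        | zero => simp
        | add z w _ _ hz hw => simp [Matrix.add_apply, hz, hw]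
        | smul c z _ hz => simp [Matrix.smul_apply, hz]
    exact if_congr hiff rfl rfl
  rw [key]
  exact classIndicator_mem A hH hJ p S hSA


lemma adj_mul_adj_apply (c d : Set (Ω × Ω)) (α β : Ω) :
    (adj F c * adj F d) α β = (cnum c d α β : F) := by
  classical
  rw [Matrix.mul_apply]
  have hterm : ∀ γ : Ω, adj F c α γ * adj F d γ β
      = if γ ∈ (outSet c α ∩ outSet (transposeRel d) β) then (1 : F) else 0 := by
    intro γ
    simp only [adj, Matrix.of_apply, outSet, transposeRel, Set.mem_inter_iff, Set.mem_setOf_eq]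
    by_cases h1 : (α, γ) ∈ c <;> by_cases h2 : (γ, β) ∈ d <;> simp [h1, h2]
  rw [Finset.sum_congr rfl (fun γ _ => hterm γ), Finset.sum_boole]
  have : (Finset.univ.filter
      (fun γ => γ ∈ outSet c α ∩ outSet (transposeRel d) β)).card = cnum c d α β := by
    rw [cnum, Set.ncard_eq_toFinset_card']
    congr 1
    ext γ
    simp [Set.mem_toFinset]
  rw [this]

end Aux

theorem statement2 {F : Type*} [Field F] [CharZero F]
    {Ω : Type*} [Fintype Ω] [DecidableEq Ω] [Nonempty Ω]
    (A : Submodule F (Matrix Ω Ω F))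
    (hA : IsCoherentJAlgebra F A) :
    ∃ P : Set (Set (Ω × Ω)),
      IsPartition P ∧
      LinearIndependent F (fun c : P => adj F (c : Set (Ω × Ω))) ∧
      Submodule.span F (adj F '' P) = A ∧
      (∀ Q : Set (Set (Ω × Ω)), IsPartition Q →
        LinearIndependent F (fun c : Q => adj F (c : Set (Ω × Ω))) →
        Submodule.span F (adj F '' Q) = A → Q = P) ∧
      IsRainbow P ∧ IsJordanCond P := by
  classical
  obtain ⟨hI, hJ, hT, hjm, hH⟩ := hA
  set P : Set (Set (Ω × Ω)) := Set.range (classRel A) with hP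
  have hadjmem : ∀ c ∈ P, adj F c ∈ A := by
    rintro c ⟨p, rfl⟩; exact adj_classRel_mem A hH hJ p
  have hpart : IsPartition P := by
    refine ⟨?_, ?_, ?_⟩
    · rintro c ⟨p, rfl⟩; exact ⟨p, self_mem_classRel A p⟩
    · rintro c ⟨p, rfl⟩ d ⟨q, rfl⟩ hne
      by_contra hne2
      obtain ⟨r, hr1, hr2⟩ := Set.nonempty_iff_ne_empty.2 hne2
      exact hne ((classRel_eq_of_mem hr1).symm.trans (classRel_eq_of_mem hr2))
    · ext p; simp only [Set.mem_sUnion, Set.mem_univ, iff_true]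
      exact ⟨classRel A p, ⟨p, rfl⟩, self_mem_classRel A p⟩
  have hlin : LinearIndependent F (fun c : P => adj F (c : Set (Ω × Ω))) := by
    rw [linearIndependent_iff']
    intro s g hsum i hi
    obtain ⟨p, hp⟩ := hpart.1 i.1 i.2
    have hval : (∑ j ∈ s, g j • adj F (j : Set (Ω × Ω))) p.1 p.2 = 0 := by
      rw [hsum]; rfl
    rw [Matrix.sum_apply] at hval
    rw [Finset.sum_eq_single i] at hval
    · have h1 : adj F (i : Set (Ω × Ω)) p.1 p.2 = 1 := by
        simp only [adj, Matrix.of_apply]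
        rw [if_pos]; exact hp
      rw [Matrix.smul_apply, h1, smul_eq_mul, mul_one] at hval
      exact hval
    · intro j hj hji
      have hne : (j : Set (Ω × Ω)) ≠ (i : Set (Ω × Ω)) := fun h => hji (Subtype.ext h)
      have hdisj := hpart.2.1 j.1 j.2 i.1 i.2 hne
      have hnm : p ∉ (j : Set (Ω × Ω)) := fun h =>
        Set.eq_empty_iff_forall_notMem.1 hdisj p ⟨h, hp⟩
      have h0 : adj F (j : Set (Ω × Ω)) p.1 p.2 = 0 := by
        simp only [adj, Matrix.of_apply]
        rw [if_neg]; exact hnm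
      rw [Matrix.smul_apply, h0, smul_eq_mul, mul_zero]
    · intro h; exact absurd hi h
  have hspan : Submodule.span F (adj F '' P) = A := by
    apply le_antisymm
    · rw [Submodule.span_le]
      rintro _ ⟨c, hc, rfl⟩
      exact hadjmem c hc
    · intro x hx
      set Cl : Finset (Set (Ω × Ω)) := Finset.univ.image (fun p : Ω × Ω => classRel A p)
        with hCl
      set val : Set (Ω × Ω) → F :=
        fun c => if h : c.Nonempty then x h.some.1 h.some.2 else 0 with hvaldef
      have hsum : x = ∑ c ∈ Cl, val c • adj F c := by
        ext a b
        rw [eq_comm, Matrix.sum_apply]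
        rw [Finset.sum_eq_single (classRel A (a, b))]
        · have hne : (classRel A (a, b)).Nonempty := ⟨(a, b), self_mem_classRel _ _⟩
          have h1 : adj F (classRel A (a, b)) a b = 1 := by
            simp only [adj, Matrix.of_apply]
            rw [if_pos]; exact self_mem_classRel A (a, b)
          rw [Matrix.smul_apply, h1, smul_eq_mul, mul_one, hvaldef]
          simp only [dif_pos hne]
          exact hne.some_mem x hx
        · intro c hc hnec
          simp only [hCl, Finset.mem_image] at hc
          obtain ⟨q, _, rfl⟩ := hc
          have hnm : (a, b) ∉ classRel A q := fun h => hnec (classRel_eq_of_mem h).symm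
          have h0 : adj F (classRel A q) a b = 0 := by
            simp only [adj, Matrix.of_apply]
            rw [if_neg]; exact hnm
          rw [Matrix.smul_apply, h0, smul_eq_mul, mul_zero]
        · intro h
          exact absurd (Finset.mem_image.2 ⟨(a, b), Finset.mem_univ _, rfl⟩) h
      rw [hsum]
      apply Submodule.sum_mem
      intro c hc
      apply Submodule.smul_mem
      apply Submodule.subset_span
      simp only [hCl, Finset.mem_image] at hc
      obtain ⟨q, _, rfl⟩ := hc
      exact ⟨classRel A q, ⟨q, rfl⟩, rfl⟩
  have huniq : ∀ Q : Set (Set (Ω × Ω)), IsPartition Q →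
      LinearIndependent F (fun c : Q => adj F (c : Set (Ω × Ω))) →
      Submodule.span F (adj F '' Q) = A → Q = P := by
    intro Q hQ _ hQspan
    have hQadj : ∀ c ∈ Q, adj F c ∈ A := fun c hc =>
      hQspan ▸ Submodule.subset_span ⟨c, hc, rfl⟩
    have hconstQ : ∀ c ∈ Q, ∀ x ∈ A, ∀ q ∈ c, ∀ q' ∈ c,
        (x : Matrix Ω Ω F) q.1 q.2 = x q'.1 q'.2 := by
      intro c hc x hx
      have hx' : x ∈ Submodule.span F (adj F '' Q) := by rw [hQspan]; exact hx
      clear hx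
      induction hx' using Submodule.span_induction with
      | mem z hz =>
        obtain ⟨d, hd, rfl⟩ := hz
        intro q hq q' hq'
        by_cases hcd : c = d
        · subst hcd
          simp only [adj, Matrix.of_apply]
          rw [if_pos hq, if_pos hq']
        · have hdisj := hQ.2.1 c hc d hd hcd
          have h1 : q ∉ d := fun h => Set.eq_empty_iff_forall_notMem.1 hdisj q ⟨hq, h⟩
          have h2 : q' ∉ d := fun h => Set.eq_empty_iff_forall_notMem.1 hdisj q' ⟨hq', h⟩
          simp only [adj, Matrix.of_apply]
          rw [if_neg h1, if_neg h2]
      | zero => intro q hq q' hq'; simp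
      | add z w _ _ hz hw =>
        intro q hq q' hq'
        simp only [Matrix.add_apply, hz q hq q' hq', hw q hq q' hq']
      | smul t z _ hz =>
        intro q hq q' hq'
        simp only [Matrix.smul_apply, hz q hq q' hq']
    have key : ∀ c ∈ Q, ∀ p ∈ c, c = classRel A p := by
      intro c hc p hp
      apply Set.Subset.antisymm
      · intro q hq x hx
        exact hconstQ c hc x hx q hq p hp
      · intro r hr
        have h1 : adj F c r.1 r.2 = adj F c p.1 p.2 := hr _ (hQadj c hc)
        have h2 : adj F c p.1 p.2 = 1 := by
          simp only [adj, Matrix.of_apply]; rw [if_pos]; exact hp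
        by_contra hrc
        have h0 : adj F c r.1 r.2 = 0 := by
          simp only [adj, Matrix.of_apply]; rw [if_neg]; exact hrc
        rw [h0, h2] at h1
        exact one_ne_zero h1.symm
    ext c
    constructor
    · intro hc
      obtain ⟨p, hp⟩ := hQ.1 c hc
      rw [key c hc p hp]
      exact ⟨p, rfl⟩
    · rintro ⟨p, rfl⟩
      have hp : p ∈ ⋃₀ Q := by rw [hQ.2.2]; trivial
      obtain ⟨c, hc, hpc⟩ := hp
      rw [← key c hc p hpc]
      exact hc
  have hrain : IsRainbow P := by
    refine ⟨hpart, ?_, ?_⟩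
    · rintro c ⟨p, rfl⟩ ⟨r, hr, hr2⟩ q hq
      have hone : (1 : Matrix Ω Ω F) q.1 q.2 = (1 : Matrix Ω Ω F) r.1 r.2 := by
        rw [hq _ hI, hr _ hI]
      have hr1 : (1 : Matrix Ω Ω F) r.1 r.2 = 1 := by
        rw [hr2.1]; exact Matrix.one_apply_eq r.2
      refine ⟨?_, trivial⟩
      by_contra hne
      rw [Matrix.one_apply_ne hne, hr1] at hone
      exact zero_ne_one hone
    · rintro c ⟨p, rfl⟩
      refine ⟨(p.2, p.1), ?_⟩
      ext q
      simp only [transposeRel, Set.mem_setOf_eq]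
      constructor
      · intro h x hx
        have := h xᵀ (hT x hx)
        simpa using this
      · intro h x hx
        have := h xᵀ (hT x hx)
        simpa using this
  have hjord : IsJordanCond P := by
    rintro c hc d hd f ⟨r, rfl⟩ p hp q hq
    have hcA := hadjmem c hc
    have hdA := hadjmem d hd
    have hmem : adj F c * adj F d + adj F d * adj F c ∈ A := by
      have h2 : (2 : F) • jmul F (adj F c) (adj F d)
          = adj F c * adj F d + adj F d * adj F c := by
        rw [jmul, smul_smul, mul_inv_cancel₀ (two_ne_zero), one_smul]
      exact h2 ▸ A.smul_mem _ (hjm _ hcA _ hdA)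
    have e1 : ∀ α β, (adj F c * adj F d + adj F d * adj F c) α β
        = ((jnum c d α β : ℕ) : F) := by
      intro α β
      rw [Matrix.add_apply, adj_mul_adj_apply, adj_mul_adj_apply, jnum]
      push_cast
      ring
    have h1 := hp _ hmem
    have h2 := hq _ hmem
    have hcast : ((jnum c d p.1 p.2 : ℕ) : F) = ((jnum c d q.1 q.2 : ℕ) : F) := by
      rw [← e1, ← e1, h1, h2]
    exact_mod_cast hcast
  exact ⟨P, hpart, hlin, hspan, huniq, hrain, hjord⟩

end JordanPaper

end
end

section
/- Let F be a field with char F ≠ 2, Ω a nonempty finite set, and X ⊆ M_Ω(F) a set of symmetric matrices. Let J(X) denote the intersection of all coherent J-algebras in M_Ω(F) containing X, and WL(X) the intersection of all coherent algebras in M_Ω(F) containing X. Then J(X) = {A ∈ WL(X) : A^T = A} if and only if there exists a coherent algebra B ⊆ M_Ω(F) with J(X) = {A ∈ B : A^T = A} (i.e. if and only if J(X) is non-proper). -/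
open Matrix

noncomputable section

namespace JordanPaper

open scoped Classical

variable {Ω : Type*}

theorem statement4 {F : Type*} [Field F] (hchar : ringChar F ≠ 2)
    {Ω : Type*} [Fintype Ω] [DecidableEq Ω] [Nonempty Ω]
    (X : Set (Matrix Ω Ω F)) (hX : ∀ x ∈ X, xᵀ = x) :
    let JX := sInf {A : Submodule F (Matrix Ω Ω F) | IsCoherentJAlgebra F A ∧ X ⊆ A}
    let WLX := sInf {A : Submodule F (Matrix Ω Ω F) | IsCoherentAlgebra F A ∧ X ⊆ A}
    ((JX : Set (Matrix Ω Ω F)) = {x | x ∈ WLX ∧ xᵀ = x} ↔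
      ∃ B : Submodule F (Matrix Ω Ω F), IsCoherentAlgebra F B ∧
        (JX : Set (Matrix Ω Ω F)) = {x | x ∈ B ∧ xᵀ = x}) := by
  intro JX WLX
  -- WLX is a coherent algebra
  have hWL : IsCoherentAlgebra F WLX := by
    refine ⟨?_, ?_, ?_, ?_, ?_⟩
    · rw [Submodule.mem_sInf]; exact fun A hA => hA.1.1
    · rw [Submodule.mem_sInf]; exact fun A hA => hA.1.2.1
    · intro x hx
      simp only [WLX, Submodule.mem_sInf] at hx ⊢
      exact fun A hA => hA.1.2.2.1 x (hx A hA)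
    · intro x hx y hy
      simp only [WLX, Submodule.mem_sInf] at hx hy ⊢
      exact fun A hA => hA.1.2.2.2.1 x (hx A hA) y (hy A hA)
    · intro x hx y hy
      simp only [WLX, Submodule.mem_sInf] at hx hy ⊢
      exact fun A hA => hA.1.2.2.2.2 x (hx A hA) y (hy A hA)
  have hXJ : X ⊆ (JX : Set (Matrix Ω Ω F)) := by
    intro x hx
    simp only [JX, SetLike.mem_coe, Submodule.mem_sInf]
    exact fun A hA => hA.2 hx
  have hXWL : X ⊆ (WLX : Set (Matrix Ω Ω F)) := by
    intro x hx
    simp only [WLX, SetLike.mem_coe, Submodule.mem_sInf]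
    exact fun A hA => hA.2 hx
  constructor
  · intro h
    exact ⟨WLX, hWL, h⟩
  · rintro ⟨B, hB, hJB⟩
    -- symmetric part of WLX as a submodule
    let S : Submodule F (Matrix Ω Ω F) :=
      { carrier := {x | x ∈ WLX ∧ xᵀ = x}
        add_mem' := fun ha hb =>
          ⟨WLX.add_mem ha.1 hb.1, by rw [Matrix.transpose_add, ha.2, hb.2]⟩
        zero_mem' := ⟨WLX.zero_mem, Matrix.transpose_zero⟩
        smul_mem' := fun c x hx =>
          ⟨WLX.smul_mem c hx.1, by rw [Matrix.transpose_smul, hx.2]⟩ }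
    have hS : IsCoherentJAlgebra F S := by
      refine ⟨⟨hWL.1, Matrix.transpose_one⟩, ⟨hWL.2.1, ?_⟩, ?_, ?_, ?_⟩
      · ext a b; rfl
      · intro x hx; exact ⟨hWL.2.2.1 x hx.1, by rw [hx.2, hx.2]⟩
      · intro x hx y hy
        refine ⟨WLX.smul_mem _ (WLX.add_mem (hWL.2.2.2.1 x hx.1 y hy.1)
          (hWL.2.2.2.1 y hy.1 x hx.1)), ?_⟩
        unfold jmul
        rw [Matrix.transpose_smul, Matrix.transpose_add, Matrix.transpose_mul,
          Matrix.transpose_mul, hx.2, hy.2, add_comm]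
      · intro x hx y hy
        refine ⟨hWL.2.2.2.2 x hx.1 y hy.1, ?_⟩
        have ht : (Matrix.hadamard x y)ᵀ = Matrix.hadamard xᵀ yᵀ := by
          ext a b
          simp [Matrix.hadamard_apply]
        rw [ht, hx.2, hy.2]
    have hXS : X ⊆ (S : Set (Matrix Ω Ω F)) := fun x hx => ⟨hXWL hx, hX x hx⟩
    have hJS : JX ≤ S := sInf_le ⟨hS, hXS⟩
    have hXB : X ⊆ (B : Set (Matrix Ω Ω F)) := fun x hx => by
      have := hXJ hx
      rw [hJB] at this
      exact this.1
    have hWB : WLX ≤ B := sInf_le ⟨hB, hXB⟩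
    ext x
    constructor
    · intro hx
      exact hJS hx
    · intro hx
      have hxB : x ∈ B := hWB hx.1
      have : x ∈ (JX : Set (Matrix Ω Ω F)) := by rw [hJB]; exact ⟨hxB, hx.2⟩
      exact this


end JordanPaper

end
end

section
/- Let (Ω,C) be a Jordan configuration. Then: (a) there exists a partition Ω = Ω_1 ∪ ... ∪ Ω_f into nonempty pairwise disjoint sets (the fibers) such that each diagonal relation 1_{Ω_i} = {(ω,ω) : ω ∈ Ω_i} is a class of C; (b) for every class C ∈ C there exist fibers Ω_i, Ω_j (not necessarily distinct) such that C ⊆ (Ω_i×Ω_j) ∪ (Ω_j×Ω_i), and the function ω ↦ |C(ω)| + |C^T(ω)| is constant on Ω_i and constant on Ω_j. -/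
open Matrix

noncomputable section

namespace JordanPaper

open scoped Classical

variable {Ω : Type*}

lemma transposeRel_transposeRel (c : Set (Ω × Ω)) : transposeRel (transposeRel c) = c := by
  ext ⟨a, b⟩; rfl

lemma transposeRel_diagRel (Δ : Set Ω) : transposeRel (diagRel Δ) = diagRel Δ := by
  ext ⟨a, b⟩
  simp only [transposeRel, diagRel, Set.mem_setOf_eq]
  constructor <;> (rintro ⟨h, h2⟩; exact ⟨h.symm, h ▸ h2⟩)

lemma outSet_diagRel_pos {Δ : Set Ω} {α : Ω} (hα : α ∈ Δ) :
    outSet (diagRel Δ) α = {α} := by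
  ext γ
  simp only [outSet, diagRel, Set.mem_setOf_eq, Set.mem_singleton_iff]
  constructor
  · rintro ⟨h, _⟩; exact h.symm
  · rintro rfl; exact ⟨rfl, hα⟩

lemma outSet_diagRel_neg {Δ : Set Ω} {α : Ω} (hα : α ∉ Δ) :
    outSet (diagRel Δ) α = ∅ := by
  ext γ
  simp only [outSet, diagRel, Set.mem_setOf_eq, Set.mem_empty_iff_false, iff_false]
  rintro ⟨_, h⟩; exact hα h

lemma cnum_diag_left (Δ : Set Ω) (c : Set (Ω × Ω)) {α β : Ω} (h : (α, β) ∈ c) :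
    cnum (diagRel Δ) c α β = if α ∈ Δ then 1 else 0 := by
  by_cases hα : α ∈ Δ
  · have h' : α ∈ outSet (transposeRel c) β := h
    rw [cnum, outSet_diagRel_pos hα,
      Set.inter_eq_left.mpr (Set.singleton_subset_iff.mpr h'), if_pos hα,
      Set.ncard_singleton]
  · rw [cnum, outSet_diagRel_neg hα, Set.empty_inter, if_neg hα, Set.ncard_empty]

lemma cnum_diag_right (Δ : Set Ω) (c : Set (Ω × Ω)) {α β : Ω} (h : (α, β) ∈ c) :
    cnum c (diagRel Δ) α β = if β ∈ Δ then 1 else 0 := by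
  by_cases hβ : β ∈ Δ
  · have h' : β ∈ outSet c α := h
    rw [cnum, transposeRel_diagRel, outSet_diagRel_pos hβ,
      Set.inter_eq_right.mpr (Set.singleton_subset_iff.mpr h'), if_pos hβ,
      Set.ncard_singleton]
  · rw [cnum, transposeRel_diagRel, outSet_diagRel_neg hβ, Set.inter_empty,
      if_neg hβ, Set.ncard_empty]

lemma jnum_diag (Δ : Set Ω) (c : Set (Ω × Ω)) {α β : Ω} (h : (α, β) ∈ c) :
    jnum (diagRel Δ) c α β = (if α ∈ Δ then 1 else 0) + (if β ∈ Δ then 1 else 0) := by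
  rw [jnum, cnum_diag_left Δ c h, cnum_diag_right Δ c h]

lemma jnum_self (c : Set (Ω × Ω)) (ω : Ω) :
    jnum c (transposeRel c) ω ω
      = (outSet c ω).ncard + (outSet (transposeRel c) ω).ncard := by
  rw [jnum, cnum, cnum, transposeRel_transposeRel, Set.inter_self, Set.inter_self]

theorem statement6 {Ω : Type*} [Fintype Ω] [Nonempty Ω]
    (P : Set (Set (Ω × Ω))) (hJC : IsJordanConfig P) :
    ∃ Q : Set (Set Ω),
      (∀ Δ ∈ Q, Δ.Nonempty) ∧
      (∀ Δ ∈ Q, ∀ Δ' ∈ Q, Δ ≠ Δ' → Δ ∩ Δ' = ∅) ∧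
      ⋃₀ Q = Set.univ ∧
      (∀ Δ ∈ Q, diagRel Δ ∈ P) ∧
      (∀ c ∈ P, ∃ Δ₁ ∈ Q, ∃ Δ₂ ∈ Q,
        c ⊆ (Δ₁ ×ˢ Δ₂) ∪ (Δ₂ ×ˢ Δ₁) ∧
        (∀ ω ∈ Δ₁, ∀ ω' ∈ Δ₁,
          (outSet c ω).ncard + (outSet (transposeRel c) ω).ncard =
            (outSet c ω').ncard + (outSet (transposeRel c) ω').ncard) ∧
        (∀ ω ∈ Δ₂, ∀ ω' ∈ Δ₂,
          (outSet c ω).ncard + (outSet (transposeRel c) ω).ncard =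
            (outSet c ω').ncard + (outSet (transposeRel c) ω').ncard)) := by
  obtain ⟨⟨⟨hne, hdisj, hcover⟩, hdiag, htrans⟩, hJ⟩ := hJC
  -- the set of fibers
  refine ⟨(fun c => {ω | (ω, ω) ∈ c}) '' {c ∈ P | c ⊆ diagRel (Set.univ : Set Ω)}, ?_, ?_, ?_, ?_, ?_⟩
  case refine_4 =>
    -- diagRel Δ ∈ P for each fiber Δ
    rintro Δ ⟨c, ⟨hcP, hcdiag⟩, rfl⟩
    have : diagRel {ω | (ω, ω) ∈ c} = c := by
      ext ⟨a, b⟩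
      simp only [diagRel, Set.mem_setOf_eq]
      constructor
      · rintro ⟨h, h2⟩
        have h' : a = b := h
        subst h'; exact h2
      · intro hab
        have h1 : a = b := (hcdiag hab).1
        subst h1; exact ⟨rfl, hab⟩
    rw [this]; exact hcP
  case refine_1 =>
    rintro Δ ⟨c, ⟨hcP, hcdiag⟩, rfl⟩
    obtain ⟨⟨a, b⟩, hab⟩ := hne c hcP
    have h1 : a = b := (hcdiag hab).1
    subst h1
    exact ⟨a, hab⟩
  case refine_2 =>
    rintro Δ ⟨c, ⟨hcP, hcdiag⟩, rfl⟩ Δ' ⟨c', ⟨hcP', hcdiag'⟩, rfl⟩ hΔ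
    have hcc' : c ≠ c' := by rintro rfl; exact hΔ rfl
    have := hdisj c hcP c' hcP' hcc'
    ext ω
    simp only [Set.mem_inter_iff, Set.mem_setOf_eq, Set.mem_empty_iff_false, iff_false]
    rintro ⟨h1, h2⟩
    have hmem : (ω, ω) ∈ c ∩ c' := ⟨h1, h2⟩
    rw [this] at hmem
    exact hmem
  case refine_3 =>
    apply Set.eq_univ_of_forall
    intro ω
    have : (ω, ω) ∈ ⋃₀ P := hcover ▸ Set.mem_univ _
    obtain ⟨c, hcP, hc⟩ := this
    have hcd : c ⊆ diagRel (Set.univ : Set Ω) :=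
      hdiag c hcP ⟨(ω, ω), hc, rfl, Set.mem_univ ω⟩
    exact ⟨{ω' | (ω', ω') ∈ c}, ⟨c, ⟨hcP, hcd⟩, rfl⟩, hc⟩
  case refine_5 =>
    intro c hcP
    -- auxiliary: every point lies in some fiber
    have hfib : ∀ ω : Ω, ∃ Δ, Δ ∈ (fun c => {ω | (ω, ω) ∈ c}) ''
        {c ∈ P | c ⊆ diagRel (Set.univ : Set Ω)} ∧ ω ∈ Δ := by
      intro ω
      have : (ω, ω) ∈ ⋃₀ P := hcover ▸ Set.mem_univ _
      obtain ⟨d, hdP, hd⟩ := this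
      have hdd : d ⊆ diagRel (Set.univ : Set Ω) :=
        hdiag d hdP ⟨(ω, ω), hd, rfl, Set.mem_univ ω⟩
      exact ⟨{ω' | (ω', ω') ∈ d}, ⟨d, ⟨hdP, hdd⟩, rfl⟩, hd⟩
    have hQP : ∀ Δ ∈ (fun c => {ω | (ω, ω) ∈ c}) ''
        {c ∈ P | c ⊆ diagRel (Set.univ : Set Ω)}, diagRel Δ ∈ P := by
      rintro Δ ⟨d, ⟨hdP, hddiag⟩, rfl⟩
      have : diagRel {ω | (ω, ω) ∈ d} = d := by
        ext ⟨a, b⟩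
        simp only [diagRel, Set.mem_setOf_eq]
        constructor
        · rintro ⟨h, h2⟩
          have h' : a = b := h
          subst h'; exact h2
        · intro hab
          have h1 : a = b := (hddiag hab).1
          subst h1; exact ⟨rfl, hab⟩
      rw [this]; exact hdP
    -- fiber disjointness, reused
    have hQdisj : ∀ Δ ∈ (fun c => {ω | (ω, ω) ∈ c}) ''
        {c ∈ P | c ⊆ diagRel (Set.univ : Set Ω)},
        ∀ Δ' ∈ (fun c => {ω | (ω, ω) ∈ c}) ''
        {c ∈ P | c ⊆ diagRel (Set.univ : Set Ω)},
        Δ ≠ Δ' → ∀ ω, ω ∈ Δ → ω ∉ Δ' := by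
      rintro Δ ⟨d, ⟨hdP, -⟩, rfl⟩ Δ' ⟨d', ⟨hdP', -⟩, rfl⟩ hΔ ω h1 h2
      have hdd' : d ≠ d' := by rintro rfl; exact hΔ rfl
      have heq := hdisj d hdP d' hdP' hdd'
      have hmem : (ω, ω) ∈ d ∩ d' := ⟨h1, h2⟩
      rw [heq] at hmem
      exact hmem
    obtain ⟨⟨α₀, β₀⟩, h₀⟩ := hne c hcP
    obtain ⟨Δ₁, hΔ₁Q, hα₀⟩ := hfib α₀
    obtain ⟨Δ₂, hΔ₂Q, hβ₀⟩ := hfib β₀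
    -- key constancy: for any fiber Δ and (α,β) ∈ c
    have hkey : ∀ Δ, diagRel Δ ∈ P → ∀ α β, (α, β) ∈ c →
        (if α ∈ Δ then 1 else 0) + (if β ∈ Δ then 1 else 0)
          = (if α₀ ∈ Δ then (1:ℕ) else 0) + (if β₀ ∈ Δ then 1 else 0) := by
      intro Δ hΔP α β hαβ
      have := hJ (diagRel Δ) hΔP c hcP c hcP (α, β) hαβ (α₀, β₀) h₀
      rwa [jnum_diag Δ c hαβ, jnum_diag Δ c h₀] at this
    -- degree constancy on any fiber
    have hdeg : ∀ Δ, diagRel Δ ∈ P → ∀ ω ∈ Δ, ∀ ω' ∈ Δ,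
        (outSet c ω).ncard + (outSet (transposeRel c) ω).ncard =
          (outSet c ω').ncard + (outSet (transposeRel c) ω').ncard := by
      intro Δ hΔP ω hω ω' hω'
      have := hJ c hcP (transposeRel c) (htrans c hcP) (diagRel Δ) hΔP
        (ω, ω) ⟨rfl, hω⟩ (ω', ω') ⟨rfl, hω'⟩
      rwa [jnum_self, jnum_self] at this
    refine ⟨Δ₁, hΔ₁Q, Δ₂, hΔ₂Q, ?_, hdeg Δ₁ (hQP Δ₁ hΔ₁Q), hdeg Δ₂ (hQP Δ₂ hΔ₂Q)⟩
    rintro ⟨α, β⟩ hαβ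
    have h1 := hkey Δ₁ (hQP Δ₁ hΔ₁Q) α β hαβ
    have h2 := hkey Δ₂ (hQP Δ₂ hΔ₂Q) α β hαβ
    by_cases hΔ : Δ₁ = Δ₂
    · subst hΔ
      rw [if_pos hα₀, if_pos hβ₀] at h1
      have hαΔ : α ∈ Δ₁ := by by_contra h; rw [if_neg h] at h1; split at h1 <;> omega
      have hβΔ : β ∈ Δ₁ := by by_contra h; rw [if_neg h] at h1; split at h1 <;> omega
      exact Or.inl ⟨hαΔ, hβΔ⟩
    · have hβ₀1 : β₀ ∉ Δ₁ := fun h => hQdisj Δ₂ hΔ₂Q Δ₁ hΔ₁Q (Ne.symm hΔ) β₀ hβ₀ h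
      have hα₀2 : α₀ ∉ Δ₂ := fun h => hQdisj Δ₁ hΔ₁Q Δ₂ hΔ₂Q hΔ α₀ hα₀ h
      rw [if_pos hα₀, if_neg hβ₀1] at h1
      rw [if_neg hα₀2, if_pos hβ₀] at h2
      by_cases hα1 : α ∈ Δ₁
      · have hβ1 : β ∉ Δ₁ := by intro h; rw [if_pos hα1, if_pos h] at h1; omega
        have hα2 : α ∉ Δ₂ := fun h => hQdisj Δ₁ hΔ₁Q Δ₂ hΔ₂Q hΔ α hα1 h
        have hβ2 : β ∈ Δ₂ := by by_contra h; rw [if_neg hα2, if_neg h] at h2; omega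
        exact Or.inl ⟨hα1, hβ2⟩
      · have hβ1 : β ∈ Δ₁ := by by_contra h; rw [if_neg hα1, if_neg h] at h1; omega
        have hβ2 : β ∉ Δ₂ := fun h => hQdisj Δ₁ hΔ₁Q Δ₂ hΔ₂Q hΔ β hβ1 h
        have hα2 : α ∈ Δ₂ := by by_contra h; rw [if_neg h, if_neg hβ2] at h2; omega
        exact Or.inr ⟨hα2, hβ1⟩

end JordanPaper

end
end

section
/- Let (Ω,C) be a symmetric Jordan configuration (every class C satisfies C^T = C) and let A ⊆ M_Ω(ℝ) be the linear span of the adjacency matrices of the classes of C. The following are equivalent: (a) every class of C is a regular relation (constant valency); (b) the diagonal relation 1_Ω is a class of C; (c) A·J_Ω ∈ span{J_Ω} for every A ∈ A; (d) A★J_Ω ∈ span{J_Ω} for every A ∈ A, where A★B = (AB+BA)/2. -/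
open Matrix

noncomputable section

namespace JordanPaper

open scoped Classical

variable {Ω : Type*}

section Aux

variable {Ω : Type*} [Fintype Ω] [DecidableEq Ω]

lemma mul_allOnes_apply (x : Matrix Ω Ω ℝ) (α β : Ω) :
    (x * (allOnes ℝ : Matrix Ω Ω ℝ)) α β = ∑ γ, x α γ := by
  simp [allOnes, Matrix.mul_apply]

lemma allOnes_mul_apply (x : Matrix Ω Ω ℝ) (α β : Ω) :
    ((allOnes ℝ : Matrix Ω Ω ℝ) * x) α β = ∑ γ, x γ β := by
  simp [allOnes, Matrix.mul_apply]

lemma adj_rowsum (c : Set (Ω × Ω)) (α : Ω) :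
    ∑ γ, adj ℝ c α γ = ((outSet c α).ncard : ℝ) := by
  classical
  rw [Set.ncard_eq_toFinset_card' (outSet c α)]
  rw [show (outSet c α).toFinset = Finset.univ.filter (fun β => (α, β) ∈ c) by
    ext β; simp [outSet]; exact Set.mem_toFinset]
  simp [adj, Finset.sum_boole]

lemma smul_allOnes_apply (l : ℝ) (α β : Ω) : ((l • allOnes ℝ : Matrix Ω Ω ℝ) : Matrix Ω Ω ℝ) α β = l := by
  simp [allOnes]

/-- `adj c * J ∈ span {J}` iff `c` is regular. -/
lemma adj_mul_allOnes_mem_iff [Nonempty Ω] (c : Set (Ω × Ω)) :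
    (adj ℝ c * (allOnes ℝ : Matrix Ω Ω ℝ) ∈ Submodule.span ℝ {(allOnes ℝ : Matrix Ω Ω ℝ)}) ↔
      ∀ ω ω' : Ω, (outSet c ω).ncard = (outSet c ω').ncard := by
  constructor
  · rintro h ω ω'
    obtain ⟨l, hl⟩ := Submodule.mem_span_singleton.1 h
    have h1 : ((outSet c ω).ncard : ℝ) = l := by
      have := congrFun (congrFun hl ω) ω
      rw [smul_allOnes_apply, mul_allOnes_apply, adj_rowsum] at this
      exact this.symm
    have h2 : ((outSet c ω').ncard : ℝ) = l := by
      have := congrFun (congrFun hl ω') ω'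
      rw [smul_allOnes_apply, mul_allOnes_apply, adj_rowsum] at this
      exact this.symm
    exact_mod_cast h1.trans h2.symm
  · intro h
    obtain ⟨ω₀⟩ := ‹Nonempty Ω›
    refine Submodule.mem_span_singleton.2 ⟨((outSet c ω₀).ncard : ℝ), ?_⟩
    ext α β
    rw [smul_allOnes_apply, mul_allOnes_apply, adj_rowsum]
    exact_mod_cast (h ω₀ α)

/-- Closure of the `x * J ∈ span {J}` property under span. -/
lemma span_mul_allOnes_mem (P : Set (Set (Ω × Ω)))
    (h : ∀ c ∈ P, adj ℝ c * (allOnes ℝ : Matrix Ω Ω ℝ) ∈ Submodule.span ℝ {(allOnes ℝ : Matrix Ω Ω ℝ)}) :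
    ∀ x ∈ Submodule.span ℝ (adj ℝ '' P),
      x * (allOnes ℝ : Matrix Ω Ω ℝ) ∈ Submodule.span ℝ {(allOnes ℝ : Matrix Ω Ω ℝ)} := by
  intro x hx
  induction hx using Submodule.span_induction with
  | mem y hy =>
    obtain ⟨c, hc, rfl⟩ := hy
    exact h c hc
  | zero => simpa using Submodule.zero_mem _
  | add y z _ _ hy hz => rw [add_mul]; exact Submodule.add_mem _ hy hz
  | smul a y _ hy => rw [smul_mul_assoc]; exact Submodule.smul_mem _ a hy

lemma symm_of_mem_span (P : Set (Set (Ω × Ω)))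
    (hsym : ∀ c ∈ P, transposeRel c = c)
    {x : Matrix Ω Ω ℝ} (hx : x ∈ Submodule.span ℝ (adj ℝ '' P)) : xᵀ = x := by
  induction hx using Submodule.span_induction with
  | mem y hy =>
    obtain ⟨c, hc, rfl⟩ := hy
    ext α β
    have hm : (β, α) ∈ c ↔ (α, β) ∈ c := by
      constructor
      · intro h; rw [← hsym c hc] at h; exact h
      · intro h; rw [← hsym c hc]; exact h
    simp only [Matrix.transpose_apply, adj, Matrix.of_apply]
    simp [hm]
  | zero => simp
  | add y z _ _ hy hz => rw [Matrix.transpose_add, hy, hz]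
  | smul a y _ hy => rw [Matrix.transpose_smul, hy]

end Aux

theorem statement8 {Ω : Type*} [Fintype Ω] [DecidableEq Ω] [Nonempty Ω]
    (P : Set (Set (Ω × Ω))) (hJC : IsJordanConfig P)
    (hsym : ∀ c ∈ P, transposeRel c = c) :
    ((∀ c ∈ P, ∀ ω ω' : Ω, (outSet c ω).ncard = (outSet c ω').ncard) ↔
      diagRel (Set.univ : Set Ω) ∈ P) ∧
    ((diagRel (Set.univ : Set Ω) ∈ P) ↔
      ∀ x ∈ Submodule.span ℝ (adj ℝ '' P),
        x * (allOnes ℝ : Matrix Ω Ω ℝ) ∈ Submodule.span ℝ {(allOnes ℝ : Matrix Ω Ω ℝ)}) ∧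
    ((∀ x ∈ Submodule.span ℝ (adj ℝ '' P),
        x * (allOnes ℝ : Matrix Ω Ω ℝ) ∈ Submodule.span ℝ {(allOnes ℝ : Matrix Ω Ω ℝ)}) ↔
      ∀ x ∈ Submodule.span ℝ (adj ℝ '' P),
        jmul ℝ x (allOnes ℝ : Matrix Ω Ω ℝ) ∈ Submodule.span ℝ {(allOnes ℝ : Matrix Ω Ω ℝ)}) := by
  obtain ⟨⟨hpart, hdiagU, htrans⟩, hjord⟩ := hJC
  -- (a) regular → (b) diagonal is a class
  have hRegToDiag : (∀ c ∈ P, ∀ ω ω' : Ω, (outSet c ω).ncard = (outSet c ω').ncard) →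
      diagRel (Set.univ : Set Ω) ∈ P := by
    intro hreg
    obtain ⟨α⟩ := ‹Nonempty Ω›
    have hmem : ((α, α) : Ω × Ω) ∈ ⋃₀ P := by rw [hpart.2.2]; trivial
    obtain ⟨c, hc, hαc⟩ := hmem
    have hsub : c ⊆ diagRel (Set.univ : Set Ω) :=
      hdiagU c hc ⟨(α, α), hαc, ⟨rfl, trivial⟩⟩
    have hceq : c = diagRel (Set.univ : Set Ω) := by
      apply Set.Subset.antisymm hsub
      rintro ⟨β, β'⟩ ⟨(hββ' : β = β'), -⟩
      subst hββ'
      have hne : (outSet c β).Nonempty := by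
        rw [← Set.ncard_pos (Set.toFinite _), hreg c hc β α]
        exact (Set.ncard_pos (Set.toFinite _)).2 ⟨α, hαc⟩
      obtain ⟨γ, hγ⟩ := hne
      obtain ⟨h1, -⟩ := hsub hγ
      have h1' : β = γ := h1
      rw [← h1'] at hγ
      exact hγ
    rw [← hceq]; exact hc
  -- (b) diagonal is a class → (a) regular
  have hDiagToReg : diagRel (Set.univ : Set Ω) ∈ P →
      (∀ c ∈ P, ∀ ω ω' : Ω, (outSet c ω).ncard = (outSet c ω').ncard) := by
    intro hdiag c hc ω ω'
    have hj := hjord c hc c hc _ hdiag (ω, ω) ⟨rfl, trivial⟩ (ω', ω') ⟨rfl, trivial⟩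
    have hcn : ∀ δ : Ω, cnum c c δ δ = (outSet c δ).ncard := by
      intro δ
      unfold cnum
      rw [hsym c hc, Set.inter_self]
    unfold jnum at hj
    simp only [hcn] at hj
    omega
  -- (a) regular ↔ (c)
  have hRegToC : (∀ c ∈ P, ∀ ω ω' : Ω, (outSet c ω).ncard = (outSet c ω').ncard) →
      ∀ x ∈ Submodule.span ℝ (adj ℝ '' P),
        x * (allOnes ℝ : Matrix Ω Ω ℝ) ∈ Submodule.span ℝ {(allOnes ℝ : Matrix Ω Ω ℝ)} := by
    intro hreg
    exact span_mul_allOnes_mem P fun c hc => (adj_mul_allOnes_mem_iff c).2 (hreg c hc)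
  have hCToReg : (∀ x ∈ Submodule.span ℝ (adj ℝ '' P),
        x * (allOnes ℝ : Matrix Ω Ω ℝ) ∈ Submodule.span ℝ {(allOnes ℝ : Matrix Ω Ω ℝ)}) →
      (∀ c ∈ P, ∀ ω ω' : Ω, (outSet c ω).ncard = (outSet c ω').ncard) := by
    intro h c hc
    exact (adj_mul_allOnes_mem_iff c).1
      (h _ (Submodule.subset_span ⟨c, hc, rfl⟩))
  have hJT : (allOnes ℝ : Matrix Ω Ω ℝ)ᵀ = allOnes ℝ := by
    ext α β; simp [allOnes]
  refine ⟨⟨hRegToDiag, hDiagToReg⟩,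
    ⟨fun hd => hRegToC (hDiagToReg hd), fun hC => hRegToDiag (hCToReg hC)⟩, ?_, ?_⟩
  · -- (c) → (d)
    intro h x hx
    have hxJ := h x hx
    have hsx := symm_of_mem_span P hsym hx
    have hJx : (allOnes ℝ : Matrix Ω Ω ℝ) * x = (x * (allOnes ℝ : Matrix Ω Ω ℝ))ᵀ := by
      rw [Matrix.transpose_mul, hsx, hJT]
    obtain ⟨l, hl⟩ := Submodule.mem_span_singleton.1 hxJ
    have h2 : (x * (allOnes ℝ : Matrix Ω Ω ℝ))ᵀ ∈ Submodule.span ℝ {(allOnes ℝ : Matrix Ω Ω ℝ)} := by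
      rw [← hl, Matrix.transpose_smul, hJT]
      exact Submodule.smul_mem _ _ (Submodule.mem_span_singleton_self _)
    unfold jmul
    rw [hJx]
    exact Submodule.smul_mem _ _ (Submodule.add_mem _ hxJ h2)
  · -- (d) → (c)
    intro h x hx
    have hj := h x hx
    have hsx := symm_of_mem_span P hsym hx
    obtain ⟨l, hl⟩ := Submodule.mem_span_singleton.1 hj
    have hsum : ∀ α : Ω, ∑ γ, x γ α = ∑ γ, x α γ := by
      intro α
      refine Finset.sum_congr rfl fun γ _ => ?_
      exact (congrFun (congrFun hsx γ) α).symm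
    have key : ∀ α : Ω, ∑ γ, x α γ = l := by
      intro α
      have h0 := congrFun (congrFun hl α) α
      rw [smul_allOnes_apply] at h0
      have h1 : l = (2 : ℝ)⁻¹ * ((x * (allOnes ℝ : Matrix Ω Ω ℝ)) α α
          + ((allOnes ℝ : Matrix Ω Ω ℝ) * x) α α) := by
        rw [h0]
        simp only [jmul, Matrix.smul_apply, Matrix.add_apply, smul_eq_mul]
      rw [mul_allOnes_apply, allOnes_mul_apply, hsum] at h1
      rw [h1]; ring
    refine Submodule.mem_span_singleton.2 ⟨l, ?_⟩
    ext α β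
    rw [smul_allOnes_apply, mul_allOnes_apply, key]

end JordanPaper

end
end
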